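/- Fix n = (3^m - 1)/2 and let S ⊆ F_3^n be the linear code with check matrix H obtained from a check matrix H* of the ternary Hamming code of length (n-1)/3 by repeating each column of H* three times and appending one all-zero column. Then the number of distinct ternary Hamming codes (linear 1-perfect codes) contained in S equals 6^{(n-1)/3} / 3^{m-1}, and the number of cosets of Hamming codes contained in S equals 6^{(n-1)/3} / 3^{m-2}. -/

import Mathlib

/-- The linear code `S ⊆ F_3^{3t+1}` whose check matrix is obtained from the check
matrix `h` (with columns `h j ∈ F_3^{m-1}`) of the ternary Hamming code of length `t`
by repeating each column three times and appending one all-zero column. -/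
def spanCode (m t : ℕ) (h : Fin t → Fin (m - 1) → ZMod 3) :
    Set (Fin (3 * t + 1) → ZMod 3) :=
  {x | ∀ r : Fin (m - 1),
    ∑ j : Fin t, h j r *
      (x ⟨3 * j.1, by have := j.2; omega⟩ + x ⟨3 * j.1 + 1, by have := j.2; omega⟩ +
        x ⟨3 * j.1 + 2, by have := j.2; omega⟩) = 0}

/-- A linear code: contains `0` and is closed under addition (over `F_3` this makes it a
subspace). -/
def IsLinearCode {N : ℕ} (D : Set (Fin N → ZMod 3)) : Prop :=
  (0 : Fin N → ZMod 3) ∈ D ∧ ∀ x ∈ D, ∀ y ∈ D, x + y ∈ D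

/-- A 1-perfect code: closed radius-1 Hamming balls around codewords partition the space. -/
def IsPerfectCode {N : ℕ} (D : Set (Fin N → ZMod 3)) : Prop :=
  ∀ x : Fin N → ZMod 3, ∃! c, c ∈ D ∧ hammingDist x c ≤ 1

namespace S15
variable {m t : ℕ}

def idx (j : Fin t) (p : Fin 3) : Fin (3 * t + 1) :=
  ⟨3 * j.1 + p.1, by have := j.2; have := p.2; omega⟩

def lastIdx (t : ℕ) : Fin (3 * t + 1) := ⟨3 * t, by omega⟩

/-- `Pi.single` specialized to our vectors (avoids dependent-type elaboration issues). -/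
noncomputable def sgl (i : Fin (3 * t + 1)) (c : ZMod 3) : Fin (3 * t + 1) → ZMod 3 :=
  Pi.single i c

lemma sgl_apply (i k : Fin (3 * t + 1)) (c : ZMod 3) :
    sgl i c k = if k = i then c else 0 := by
  classical
  simp [sgl, Pi.single_apply]

lemma idx_ne_last (j : Fin t) (p : Fin 3) : idx j p ≠ lastIdx t := by
  have := j.2; have := p.2
  simp only [idx, lastIdx, Fin.mk.injEq, ne_eq]
  omega

lemma idx_inj {j j' : Fin t} {p p' : Fin 3} (hh : idx j p = idx j' p') : j = j' ∧ p = p' := by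
  have h2 := j.2; have h3 := j'.2; have h4 := p.2; have h5 := p'.2
  simp only [idx, Fin.mk.injEq] at hh
  constructor <;> [exact Fin.ext (by omega); exact Fin.ext (by omega)]

/-- The check map of `S` (rows indexed by `Fin (m-1)`), as a linear map. -/
noncomputable def HmL (h : Fin t → Fin (m - 1) → ZMod 3) :
    (Fin (3 * t + 1) → ZMod 3) →ₗ[ZMod 3] (Fin (m - 1) → ZMod 3) where
  toFun x r := ∑ j : Fin t, h j r *
      (x (idx j 0) + x (idx j 1) + x (idx j 2))
  map_add' x y := by
    funext r
    simp only [Pi.add_apply]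
    rw [← Finset.sum_add_distrib]
    exact Finset.sum_congr rfl fun j _ => by ring
  map_smul' c x := by
    funext r
    simp only [Pi.smul_apply, smul_eq_mul, RingHom.id_apply, Finset.mul_sum]
    exact Finset.sum_congr rfl fun j _ => by ring

lemma mem_spanCode {h : Fin t → Fin (m - 1) → ZMod 3} {x} :
    x ∈ spanCode m t h ↔ HmL h x = 0 := by
  constructor
  · intro hx
    funext r
    have := hx r
    simpa [HmL, idx] using this
  · intro hx r
    have := congrFun hx r
    simpa [HmL, idx] using this

/-- dot product as a linear map in the second variable. -/
noncomputable def dotL (g : Fin (3 * t + 1) → ZMod 3) :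
    (Fin (3 * t + 1) → ZMod 3) →ₗ[ZMod 3] ZMod 3 where
  toFun x := ∑ i, g i * x i
  map_add' x y := by
    simp only [Pi.add_apply]
    rw [← Finset.sum_add_distrib]
    exact Finset.sum_congr rfl fun j _ => by ring
  map_smul' c x := by
    simp only [Pi.smul_apply, smul_eq_mul, RingHom.id_apply, Finset.mul_sum]
    exact Finset.sum_congr rfl fun j _ => by ring

lemma dotL_single (g : Fin (3 * t + 1) → ZMod 3) (i : Fin (3 * t + 1)) (c : ZMod 3) :
    dotL g (sgl i c) = g i * c := by
  classical
  simp only [dotL, LinearMap.coe_mk, AddHom.coe_mk]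
  rw [Finset.sum_eq_single i]
  · simp [sgl_apply]
  · intro b _ hb; simp [sgl_apply, hb]
  · simp

lemma HmL_single_idx (h : Fin t → Fin (m - 1) → ZMod 3) (j : Fin t) (p : Fin 3) (c : ZMod 3) :
    HmL h (sgl (idx j p) c) = c • h j := by
  classical
  funext r
  simp only [HmL, LinearMap.coe_mk, AddHom.coe_mk, Pi.smul_apply, smul_eq_mul]
  rw [Finset.sum_eq_single j]
  · have hne : ∀ p' : Fin 3, p' ≠ p → sgl (idx j p) c (idx j p') = 0 := by
      intro p' hp'
      rw [sgl_apply, if_neg]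
      intro hh; exact hp' (idx_inj hh).2
    have heq : sgl (idx j p) c (idx j p) = c := by rw [sgl_apply, if_pos rfl]
    fin_cases p <;> simp_all <;> ring
  · intro j' _ hj'
    have : ∀ p' : Fin 3, sgl (idx j p) c (idx j' p') = 0 := by
      intro p'
      rw [sgl_apply, if_neg]
      intro hh; exact hj' (idx_inj hh).1
    simp [this]
  · simp

lemma HmL_single_last (h : Fin t → Fin (m - 1) → ZMod 3) (c : ZMod 3) :
    HmL h (sgl (lastIdx t) c) = 0 := by
  classical
  funext r
  simp only [HmL, LinearMap.coe_mk, AddHom.coe_mk, Pi.zero_apply]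
  apply Finset.sum_eq_zero
  intro j _
  have : ∀ p : Fin 3, sgl (lastIdx t) c (idx j p) = 0 := by
    intro p
    rw [sgl_apply, if_neg (idx_ne_last j p)]
  simp [this]

variable {m t : ℕ}

lemma two_smul_cancel (x : Fin (m-1) → ZMod 3) : (2 : ZMod 3) • (2 : ZMod 3) • x = x := by
  rw [smul_smul]
  have : (2 : ZMod 3) * 2 = 1 := by decide
  rw [this, one_smul]

/-- Every nonzero vector is a nonzero multiple of some column. -/
lemma cover (h : Fin t → Fin (m - 1) → ZMod 3) (ht : 2 * t + 1 = 3 ^ (m - 1))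
    (hnz : ∀ j, h j ≠ 0)
    (hnc : ∀ i j, i ≠ j → ∀ c : ZMod 3, h i ≠ c • h j)
    (v : Fin (m - 1) → ZMod 3) (hv : v ≠ 0) :
    ∃ (j : Fin t) (c : ZMod 3), c ≠ 0 ∧ v = c • h j := by
  classical
  set T : Fin t → Finset (Fin (m - 1) → ZMod 3) := fun j => {h j, (2 : ZMod 3) • h j} with hT
  have memT : ∀ j a, a ∈ T j ↔ a = h j ∨ a = (2 : ZMod 3) • h j := by
    intro j a; simp [hT]
  have h2nz : ∀ j, (2 : ZMod 3) • h j ≠ 0 := by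
    intro j hh
    apply hnz j
    have := congrArg (fun y => (2 : ZMod 3) • y) hh
    simpa [two_smul_cancel] using this
  have hcardT : ∀ j, (T j).card = 2 := by
    intro j
    rw [hT]
    rw [Finset.card_insert_of_notMem, Finset.card_singleton]
    simp only [Finset.mem_singleton]
    intro hh
    apply hnz j
    funext s
    have h1 := congrFun hh s
    simp only [Pi.smul_apply, smul_eq_mul] at h1
    show h j s = 0
    linear_combination -h1
  have hdisj : ∀ i ∈ Finset.univ (α := Fin t), ∀ j ∈ Finset.univ (α := Fin t), i ≠ j →
      Disjoint (T i) (T j) := by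
    intro i _ j _ hij
    rw [Finset.disjoint_left]
    intro a hai haj
    rw [memT] at hai haj
    rcases hai with hai | hai <;> rcases haj with haj | haj
    · exact hnc i j hij 1 (by rw [one_smul]; exact hai.symm.trans haj)
    · exact hnc i j hij 2 (hai.symm.trans haj)
    · apply hnc i j hij 2
      have h1 : (2 : ZMod 3) • h i = h j := hai.symm.trans haj
      calc h i = (2 : ZMod 3) • (2 : ZMod 3) • h i := (two_smul_cancel _).symm
        _ = (2 : ZMod 3) • h j := by rw [h1]
    · apply hnc i j hij 1
      have h1 : (2 : ZMod 3) • h i = (2 : ZMod 3) • h j := hai.symm.trans haj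
      have h2 := congrArg (fun y => (2 : ZMod 3) • y) h1
      simpa [two_smul_cancel, one_smul] using h2
  have hsub : (Finset.univ.biUnion T) ⊆ Finset.univ.erase 0 := by
    intro a ha
    rw [Finset.mem_biUnion] at ha
    obtain ⟨j, _, haj⟩ := ha
    rw [Finset.mem_erase]
    refine ⟨?_, Finset.mem_univ _⟩
    rw [memT] at haj
    rcases haj with rfl | rfl
    · exact hnz j
    · exact h2nz j
  have hcardU : (Finset.univ.biUnion T).card = 2 * t := by
    rw [Finset.card_biUnion hdisj]
    rw [Finset.sum_congr rfl (fun j _ => hcardT j)]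
    simp [mul_comm]
  have hcardE : (Finset.univ.erase (0 : Fin (m-1) → ZMod 3)).card = 2 * t := by
    rw [Finset.card_erase_of_mem (Finset.mem_univ _), Finset.card_univ]
    have : Fintype.card (Fin (m - 1) → ZMod 3) = 3 ^ (m - 1) := by
      rw [Fintype.card_fun]
      simp
    omega
  have hEq : Finset.univ.biUnion T = Finset.univ.erase 0 :=
    Finset.eq_of_subset_of_card_le hsub (by rw [hcardU, hcardE])
  have hv' : v ∈ Finset.univ.biUnion T := by
    rw [hEq, Finset.mem_erase]; exact ⟨hv, Finset.mem_univ _⟩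
  rw [Finset.mem_biUnion] at hv'
  obtain ⟨j, _, hj⟩ := hv'
  rw [memT] at hj
  rcases hj with rfl | rfl
  · exact ⟨j, 1, one_ne_zero, (one_smul _ _).symm⟩
  · exact ⟨j, 2, by decide, rfl⟩

lemma idx_eq_iff {j j' : Fin t} {p p' : Fin 3} : idx j p = idx j' p' ↔ j = j' ∧ p = p' :=
  ⟨idx_inj, by rintro ⟨rfl, rfl⟩; rfl⟩

/-- `Pi.single` in the syndrome space. -/
noncomputable def sglR (m : ℕ) (r : Fin (m - 1)) (c : ZMod 3) : Fin (m - 1) → ZMod 3 :=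
  Pi.single r c

lemma sglR_apply (r s : Fin (m - 1)) (c : ZMod 3) :
    sglR m r c s = if s = r then c else 0 := by
  classical
  simp [sglR, Pi.single_apply]

variable (h : Fin t → Fin (m - 1) → ZMod 3)

lemma dot_comm (g x : Fin (3 * t + 1) → ZMod 3) : dotL g x = dotL x g := by
  simp only [dotL, LinearMap.coe_mk, AddHom.coe_mk]
  exact Finset.sum_congr rfl fun i _ => mul_comm _ _

/-- The `r`-th row of the check matrix of `S`, as a vector. -/
noncomputable def rowV (r : Fin (m - 1)) : Fin (3 * t + 1) → ZMod 3 :=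
  ∑ j : Fin t, (sgl (idx j 0) (h j r) + sgl (idx j 1) (h j r) + sgl (idx j 2) (h j r))

noncomputable def rowComb (lam : Fin (m - 1) → ZMod 3) : Fin (3 * t + 1) → ZMod 3 :=
  ∑ r, lam r • rowV h r

lemma dotL_rowV (x : Fin (3 * t + 1) → ZMod 3) (r : Fin (m - 1)) :
    dotL x (rowV h r) = HmL h x r := by
  rw [rowV, map_sum]
  have : ∀ j : Fin t,
      dotL x (sgl (idx j 0) (h j r) + sgl (idx j 1) (h j r) + sgl (idx j 2) (h j r)) =
        h j r * (x (idx j 0) + x (idx j 1) + x (idx j 2)) := by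
    intro j
    rw [map_add, map_add, dotL_single, dotL_single, dotL_single]
    ring
  rw [Finset.sum_congr rfl fun j _ => this j]
  rfl

lemma dotL_rowComb (lam : Fin (m - 1) → ZMod 3) (x : Fin (3 * t + 1) → ZMod 3) :
    dotL (rowComb h lam) x = ∑ r, lam r * HmL h x r := by
  rw [dot_comm, rowComb, map_sum]
  exact Finset.sum_congr rfl fun r _ => by rw [map_smul, dotL_rowV, smul_eq_mul]

lemma rowV_apply_idx (r : Fin (m - 1)) (j : Fin t) (p : Fin 3) :
    rowV h r (idx j p) = h j r := by
  classical
  rw [rowV, Finset.sum_apply, Finset.sum_eq_single j]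
  · fin_cases p <;> simp [sgl_apply, idx_eq_iff, Fin.mk.injEq]
  · intro j' _ hj'
    have : ∀ p' : Fin 3, sgl (idx j' p') (h j' r) (idx j p) = 0 := fun p' => by
      rw [sgl_apply, if_neg (fun hh => hj' (idx_inj hh).1.symm)]
    simp [this]
  · simp

lemma rowV_apply_last (r : Fin (m - 1)) : rowV h r (lastIdx t) = 0 := by
  classical
  rw [rowV, Finset.sum_apply]
  apply Finset.sum_eq_zero
  intro j _
  have : ∀ p' : Fin 3, sgl (idx j p') (h j r) (lastIdx t) = 0 := fun p' => by
    rw [sgl_apply, if_neg (fun hh => idx_ne_last j p' hh.symm)]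
  simp [this]

lemma rowComb_apply_idx (lam : Fin (m - 1) → ZMod 3) (j : Fin t) (p : Fin 3) :
    rowComb h lam (idx j p) = ∑ r, lam r * h j r := by
  rw [rowComb, Finset.sum_apply]
  exact Finset.sum_congr rfl fun r _ => by rw [Pi.smul_apply, rowV_apply_idx, smul_eq_mul]

lemma rowComb_apply_last (lam : Fin (m - 1) → ZMod 3) :
    rowComb h lam (lastIdx t) = 0 := by
  rw [rowComb, Finset.sum_apply]
  apply Finset.sum_eq_zero
  intro r _
  rw [Pi.smul_apply, rowV_apply_last, smul_zero]

lemma sum_single_syndrome (v : Fin (m - 1) → ZMod 3) :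
    ∑ r, v r • sglR m r 1 = v := by
  classical
  funext s
  rw [Finset.sum_apply, Finset.sum_eq_single s]
  · rw [Pi.smul_apply, sglR_apply, if_pos rfl, smul_eq_mul, mul_one]
  · intro r _ hr
    rw [Pi.smul_apply, sglR_apply, if_neg (Ne.symm hr), smul_zero]
  · simp

section Cover

variable (ht : 2 * t + 1 = 3 ^ (m - 1))
    (hnz : ∀ j, h j ≠ 0)
    (hnc : ∀ i j, i ≠ j → ∀ c : ZMod 3, h i ≠ c • h j)

include ht hnz hnc

lemma HmL_surj (v : Fin (m - 1) → ZMod 3) : ∃ x, HmL h x = v := by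
  by_cases hv : v = 0
  · exact ⟨0, by rw [map_zero, hv]⟩
  · obtain ⟨j, c, _, rfl⟩ := cover h ht hnz hnc v hv
    exact ⟨sgl (idx j 0) c, HmL_single_idx h j 0 c⟩

lemma rows_indep {lam : Fin (m - 1) → ZMod 3} (hlam : rowComb h lam = 0) : lam = 0 := by
  have hz : ∀ j, ∑ r, lam r * h j r = 0 := by
    intro j
    have := congrFun hlam (idx j 0)
    rwa [rowComb_apply_idx] at this
  have hall : ∀ v : Fin (m - 1) → ZMod 3, ∑ r, lam r * v r = 0 := by
    intro v
    by_cases hv : v = 0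
    · simp [hv]
    · obtain ⟨j, c, _, rfl⟩ := cover h ht hnz hnc v hv
      have : ∀ r, lam r * ((c • h j) r) = c * (lam r * h j r) := by
        intro r; rw [Pi.smul_apply, smul_eq_mul]; ring
      rw [Finset.sum_congr rfl fun r _ => this r, ← Finset.mul_sum, hz, mul_zero]
  funext s
  have := hall (sglR m s 1)
  rw [Finset.sum_eq_single s] at this
  · rw [sglR_apply, if_pos rfl, mul_one] at this
    simpa using this
  · intro r _ hr
    rw [sglR_apply, if_neg hr, mul_zero]
  · simp

lemma annihilator {g : Fin (3 * t + 1) → ZMod 3}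
    (hg : ∀ x, HmL h x = 0 → dotL g x = 0) : ∃ lam, g = rowComb h lam := by
  classical
  choose u hu using fun v => HmL_surj h ht hnz hnc v
  set lam : Fin (m - 1) → ZMod 3 := fun r => dotL g (u (sglR m r 1)) with hlam
  have key : ∀ x, dotL g x = ∑ r, HmL h x r * lam r := by
    intro x
    have hy : HmL h (x - ∑ r, HmL h x r • u (sglR m r 1)) = 0 := by
      rw [map_sub, map_sum]
      have : ∀ r, HmL h (HmL h x r • u (sglR m r 1)) = HmL h x r • sglR m r 1 := fun r => by
        rw [map_smul, hu]
      rw [Finset.sum_congr rfl fun r _ => this r, sum_single_syndrome, sub_self]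
    have h0 := hg _ hy
    rw [map_sub, map_sum, sub_eq_zero] at h0
    rw [h0]
    exact Finset.sum_congr rfl fun r _ => by rw [map_smul, smul_eq_mul]
  refine ⟨lam, ?_⟩
  funext i
  have h1 : g i = dotL g (sgl i 1) := by rw [dotL_single, mul_one]
  have h2 : rowComb h lam i = dotL (rowComb h lam) (sgl i 1) := by rw [dotL_single, mul_one]
  rw [h1, h2, key, dotL_rowComb]
  exact Finset.sum_congr rfl fun r _ => mul_comm _ _

end Cover

/-! ### Codes cut out by an extra check row -/

def Valid (g : Fin (3 * t + 1) → ZMod 3) : Prop :=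
  (∀ (j : Fin t) (p p' : Fin 3), p ≠ p' → g (idx j p) ≠ g (idx j p')) ∧ g (lastIdx t) ≠ 0

/-- The code cut out of `S` by the extra row `g`, at syndrome value `α`. -/
def Dg (h : Fin t → Fin (m - 1) → ZMod 3) (g : Fin (3 * t + 1) → ZMod 3) (α : ZMod 3) :
    Set (Fin (3 * t + 1) → ZMod 3) :=
  {x | HmL h x = 0 ∧ dotL g x = α}

abbrev Cg (h : Fin t → Fin (m - 1) → ZMod 3) (g : Fin (3 * t + 1) → ZMod 3) :
    Set (Fin (3 * t + 1) → ZMod 3) := Dg h g 0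

lemma smul_cancel_mod {M : Type*} [AddCommGroup M] [Module (ZMod 3) M] {c : ZMod 3}
    (hc : c ≠ 0) {X Y : M} (hh : c • X = c • Y) : X = Y := by
  have := congrArg (fun Z => c⁻¹ • Z) hh
  simpa [smul_smul, inv_mul_cancel₀ hc] using this

noncomputable def Mcol (h : Fin t → Fin (m - 1) → ZMod 3) (g : Fin (3 * t + 1) → ZMod 3)
    (i : Fin (3 * t + 1)) : (Fin (m - 1) → ZMod 3) × ZMod 3 :=
  (HmL h (sgl i 1), dotL g (sgl i 1))

lemma sgl_smul (i : Fin (3 * t + 1)) (c : ZMod 3) : sgl i c = c • sgl i 1 := by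
  funext k
  rw [Pi.smul_apply, sgl_apply, sgl_apply, smul_eq_mul]
  split_ifs <;> ring

lemma Mcol_idx (h : Fin t → Fin (m - 1) → ZMod 3) (g) (j : Fin t) (p : Fin 3) :
    Mcol h g (idx j p) = (h j, g (idx j p)) := by
  rw [Mcol, HmL_single_idx, one_smul, dotL_single, mul_one]

lemma Mcol_last (h : Fin t → Fin (m - 1) → ZMod 3) (g) :
    Mcol h g (lastIdx t) = (0, g (lastIdx t)) := by
  rw [Mcol, HmL_single_last, dotL_single, mul_one]

lemma idx_cases (i : Fin (3 * t + 1)) : (∃ j p, i = idx j p) ∨ i = lastIdx t := by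
  by_cases hlt : i.1 < 3 * t
  · left
    refine ⟨⟨i.1 / 3, by omega⟩, ⟨i.1 % 3, by omega⟩, ?_⟩
    simp only [idx, Fin.ext_iff]
    omega
  · right
    have := i.2
    simp only [lastIdx, Fin.ext_iff]
    omega

section ValidCols

variable {h : Fin t → Fin (m - 1) → ZMod 3} {g : Fin (3 * t + 1) → ZMod 3}
variable (hnz : ∀ j, h j ≠ 0)
    (hnc : ∀ i j, i ≠ j → ∀ c : ZMod 3, h i ≠ c • h j)
    (hv : Valid g)

include hnz hv

lemma Mcol_nz (i : Fin (3 * t + 1)) : Mcol h g i ≠ 0 := by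
  rcases idx_cases i with ⟨j, p, rfl⟩ | rfl
  · rw [Mcol_idx]
    intro hh
    exact hnz j (congrArg Prod.fst hh)
  · rw [Mcol_last]
    intro hh
    exact hv.2 (congrArg Prod.snd hh)

include hnc

lemma Mcol_ncol {i i' : Fin (3 * t + 1)} (hii : i ≠ i') (c : ZMod 3) :
    Mcol h g i ≠ c • Mcol h g i' := by
  intro hh
  rcases idx_cases i with ⟨j, p, rfl⟩ | rfl <;> rcases idx_cases i' with ⟨j', p', rfl⟩ | rfl
  · rw [Mcol_idx, Mcol_idx, Prod.smul_mk, Prod.mk.injEq] at hh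
    by_cases hjj : j = j'
    · subst hjj
      have hpp : p ≠ p' := fun hp => hii (by rw [hp])
      -- from h j = c • h j and h j ≠ 0 get c = 1
      have hc1 : c = 1 := by
        by_contra hc
        apply hnz j
        funext s
        have := congrFun hh.1 s
        rw [Pi.smul_apply, smul_eq_mul] at this
        have h2 : (1 - c) * h j s = 0 := by linear_combination this
        rcases mul_eq_zero.mp h2 with h3 | h3
        · exact absurd (by linear_combination -h3 : c = 1) hc
        · exact h3
      rw [hc1, smul_eq_mul, one_mul] at hh
      exact hv.1 j p p' hpp hh.2
    · exact hnc j j' hjj c hh.1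
  · rw [Mcol_idx, Mcol_last, Prod.smul_mk, Prod.mk.injEq, smul_zero] at hh
    exact hnz j hh.1
  · rw [Mcol_last, Mcol_idx, Prod.smul_mk, Prod.mk.injEq, smul_eq_mul] at hh
    by_cases hc : c = 0
    · rw [hc, zero_mul] at hh
      exact hv.2 hh.2
    · apply hnz j'
      funext s
      have := congrFun hh.1 s
      rw [Pi.smul_apply, Pi.zero_apply, smul_eq_mul] at this
      exact (mul_eq_zero.mp this.symm).resolve_left hc
  · exact hii rfl

end ValidCols

lemma sum_sgl (x : Fin (3 * t + 1) → ZMod 3) : ∑ i, sgl i (x i) = x := by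
  classical
  funext k
  rw [Finset.sum_apply, Finset.sum_eq_single k]
  · rw [sgl_apply, if_pos rfl]
  · intro i _ hi
    rw [sgl_apply, if_neg (Ne.symm hi)]
  · simp

lemma HmL_decomp (h : Fin t → Fin (m - 1) → ZMod 3) (x : Fin (3 * t + 1) → ZMod 3) :
    HmL h x = ∑ i, x i • HmL h (sgl i 1) := by
  conv_lhs => rw [← sum_sgl x]
  rw [map_sum]
  exact Finset.sum_congr rfl fun i _ => by rw [sgl_smul, map_smul]

lemma dotL_decomp (g x : Fin (3 * t + 1) → ZMod 3) :
    dotL g x = ∑ i, x i • dotL g (sgl i 1) := by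
  conv_lhs => rw [← sum_sgl x]
  rw [map_sum]
  exact Finset.sum_congr rfl fun i _ => by rw [sgl_smul, map_smul]

lemma syn_decomp (h : Fin t → Fin (m - 1) → ZMod 3) (g x : Fin (3 * t + 1) → ZMod 3) :
    ((HmL h x, dotL g x) : (Fin (m - 1) → ZMod 3) × ZMod 3) = ∑ i, x i • Mcol h g i := by
  have h1 : (∑ i, x i • Mcol h g i).1 = ∑ i, x i • HmL h (sgl i 1) := by
    rw [Prod.fst_sum]
    rfl
  have h2 : (∑ i, x i • Mcol h g i).2 = ∑ i, x i • dotL g (sgl i 1) := by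
    rw [Prod.snd_sum]
    rfl
  refine Prod.ext ?_ ?_
  · rw [h1, HmL_decomp]
  · rw [h2, dotL_decomp]

lemma card_nonzero_zmod3 : Fintype.card {c : ZMod 3 // c ≠ 0} = 2 := by decide

lemma syndrome_cover {h : Fin t → Fin (m - 1) → ZMod 3} {g : Fin (3 * t + 1) → ZMod 3}
    (ht : 2 * t + 1 = 3 ^ (m - 1))
    (hnz : ∀ j, h j ≠ 0)
    (hnc : ∀ i j, i ≠ j → ∀ c : ZMod 3, h i ≠ c • h j)
    (hv : Valid g) (s : (Fin (m - 1) → ZMod 3) × ZMod 3) :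
    s = 0 ∨ ∃ (i : Fin (3 * t + 1)) (c : ZMod 3), c ≠ 0 ∧ s = c • Mcol h g i := by
  classical
  set Φ : Option ({c : ZMod 3 // c ≠ 0} × Fin (3 * t + 1)) →
      (Fin (m - 1) → ZMod 3) × ZMod 3 :=
    fun o => o.elim 0 (fun q => q.1.1 • Mcol h g q.2) with hΦ
  have hinj : Function.Injective Φ := by
    rintro (_ | ⟨c, i⟩) (_ | ⟨c', i'⟩) hab
    · rfl
    · exfalso
      have : c'.1 • Mcol h g i' = c'.1 • (0 : (Fin (m - 1) → ZMod 3) × ZMod 3) := by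
        rw [smul_zero]; exact hab.symm
      exact Mcol_nz hnz hv i' (smul_cancel_mod c'.2 this)
    · exfalso
      have : c.1 • Mcol h g i = c.1 • (0 : (Fin (m - 1) → ZMod 3) × ZMod 3) := by
        rw [smul_zero]; exact hab
      exact Mcol_nz hnz hv i (smul_cancel_mod c.2 this)
    · simp only [hΦ, Option.elim] at hab
      by_cases hii : i = i'
      · subst hii
        have hcc : c.1 = c'.1 := by
          by_contra hcc
          have h1 : (c.1 - c'.1) • Mcol h g i = 0 := by
            rw [sub_smul, hab, sub_self]
          have h2 : (c.1 - c'.1) • Mcol h g i = (c.1 - c'.1) • 0 := by rw [smul_zero, h1]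
          exact Mcol_nz hnz hv i (smul_cancel_mod (sub_ne_zero.mpr hcc) h2)
        rw [Option.some.injEq, Prod.mk.injEq]
        exact ⟨Subtype.ext hcc, rfl⟩
      · exfalso
        have h1 : Mcol h g i = (c.1⁻¹ * c'.1) • Mcol h g i' := by
          rw [mul_smul, ← hab, smul_smul, inv_mul_cancel₀ c.2, one_smul]
        exact Mcol_ncol hnz hnc hv hii _ h1
  have hcard : Fintype.card (Option ({c : ZMod 3 // c ≠ 0} × Fin (3 * t + 1))) =
      Fintype.card ((Fin (m - 1) → ZMod 3) × ZMod 3) := by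
    rw [Fintype.card_option, Fintype.card_prod, card_nonzero_zmod3, Fintype.card_fin,
      Fintype.card_prod, Fintype.card_fun]
    simp only [ZMod.card, Fintype.card_fin]
    omega
  have hbij := (Fintype.bijective_iff_injective_and_card Φ).mpr ⟨hinj, hcard⟩
  obtain ⟨o, ho⟩ := hbij.2 s
  rcases o with _ | ⟨c, i⟩
  · exact Or.inl ho.symm
  · refine Or.inr ⟨i, c.1, c.2, ?_⟩
    simpa [hΦ] using ho.symm


/-! ### Perfectness -/

lemma hn_sgl_le (i : Fin (3 * t + 1)) (c : ZMod 3) : hammingNorm (sgl i c) ≤ 1 := by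
  classical
  rw [hammingNorm]
  refine le_trans (Finset.card_le_card ?_) (le_of_eq (Finset.card_singleton i))
  intro k hk
  simp only [Finset.mem_filter, Finset.mem_univ, true_and] at hk
  simp only [Finset.mem_singleton]
  by_contra hki
  exact hk (by rw [sgl_apply, if_neg hki])

lemma dist_sub_sgl_le_one (x : Fin (3 * t + 1) → ZMod 3) (i : Fin (3 * t + 1)) (c : ZMod 3) :
    hammingDist x (x - sgl i c) ≤ 1 := by
  rw [hammingDist_comm, hammingDist_eq_hammingNorm, neg_sub, sub_add_cancel]
  exact hn_sgl_le i c

lemma mem_Dg {h : Fin t → Fin (m - 1) → ZMod 3} {g : Fin (3 * t + 1) → ZMod 3} {α x} :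
    x ∈ Dg h g α ↔ HmL h x = 0 ∧ dotL g x = α := Iff.rfl

lemma Dg_sub_span {h : Fin t → Fin (m - 1) → ZMod 3} {g : Fin (3 * t + 1) → ZMod 3} (α : ZMod 3) :
    Dg h g α ⊆ spanCode m t h := fun _ hx => mem_spanCode.mpr hx.1

lemma Cg_linear (h : Fin t → Fin (m - 1) → ZMod 3) (g : Fin (3 * t + 1) → ZMod 3) :
    IsLinearCode (Cg h g) :=
  ⟨⟨map_zero _, map_zero _⟩, fun x hx y hy =>
    ⟨by rw [map_add, hx.1, hy.1, add_zero], by rw [map_add, hx.2, hy.2, add_zero]⟩⟩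

section Perfect

variable {h : Fin t → Fin (m - 1) → ZMod 3} {g : Fin (3 * t + 1) → ZMod 3}

lemma wt_le_two_eq_zero
    (hnz : ∀ j, h j ≠ 0)
    (hnc : ∀ i j, i ≠ j → ∀ c : ZMod 3, h i ≠ c • h j)
    (hv : Valid g) {d : Fin (3 * t + 1) → ZMod 3}
    (hd1 : HmL h d = 0) (hd2 : dotL g d = 0) (hw : hammingNorm d ≤ 2) : d = 0 := by
  classical
  by_contra hd0
  set s : Finset (Fin (3 * t + 1)) := Finset.univ.filter (fun k => d k ≠ 0) with hsdef
  have hmem : ∀ k, k ∈ s ↔ d k ≠ 0 := by intro k; simp [hsdef]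
  have hwt : s.card ≤ 2 := by
    have : hammingNorm d = s.card := rfl
    omega
  have hs0 : s.Nonempty := by
    obtain ⟨k, hk⟩ : ∃ k, d k ≠ 0 := by
      by_contra hall; push_neg at hall; exact hd0 (funext hall)
    exact ⟨k, (hmem k).mpr hk⟩
  have hsyn : (0 : (Fin (m - 1) → ZMod 3) × ZMod 3) = ∑ i, d i • Mcol h g i := by
    rw [← syn_decomp, hd1, hd2]
    rfl
  have hsum : ∑ i, d i • Mcol h g i = ∑ i ∈ s, d i • Mcol h g i := by
    symm
    apply Finset.sum_subset (Finset.subset_univ s)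
    intro i _ hi
    have : d i = 0 := by by_contra hne; exact hi ((hmem i).mpr hne)
    rw [this, zero_smul]
  have hcard : s.card = 1 ∨ s.card = 2 := by
    have h1 : 1 ≤ s.card := Finset.Nonempty.card_pos hs0
    omega
  rcases hcard with h1 | h2
  · obtain ⟨i, hi⟩ := Finset.card_eq_one.mp h1
    have heq : (0 : (Fin (m - 1) → ZMod 3) × ZMod 3) = d i • Mcol h g i := by
      rw [hsyn, hsum, hi, Finset.sum_singleton]
    have hdi : d i ≠ 0 := (hmem i).mp (hi ▸ Finset.mem_singleton_self i)
    exact Mcol_nz hnz hv i (smul_cancel_mod hdi (by rw [smul_zero]; exact heq.symm))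
  · obtain ⟨i, i', hii, hi⟩ := Finset.card_eq_two.mp h2
    have hdi : d i ≠ 0 := (hmem i).mp (by rw [hi]; simp)
    have hdi' : d i' ≠ 0 := (hmem i').mp (by rw [hi]; simp)
    have hsum2 : d i • Mcol h g i + d i' • Mcol h g i' = 0 := by
      have heq2 : ∑ k ∈ s, d k • Mcol h g k = d i • Mcol h g i + d i' • Mcol h g i' := by
        rw [hi, Finset.sum_insert (by simp [hii]), Finset.sum_singleton]
      rw [← heq2, ← hsum, ← hsyn]
    apply Mcol_ncol hnz hnc hv hii ((d i)⁻¹ * (- d i'))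
    have h3 : d i • Mcol h g i = (- d i') • Mcol h g i' := by
      rw [neg_smul]
      exact eq_neg_of_add_eq_zero_left hsum2
    calc Mcol h g i = (d i)⁻¹ • (d i • Mcol h g i) := by
          rw [smul_smul, inv_mul_cancel₀ hdi, one_smul]
      _ = (d i)⁻¹ • ((- d i') • Mcol h g i') := by rw [h3]
      _ = ((d i)⁻¹ * (- d i')) • Mcol h g i' := by rw [smul_smul]


theorem perfect_of_valid (ht : 2 * t + 1 = 3 ^ (m - 1))
    (hnz : ∀ j, h j ≠ 0)
    (hnc : ∀ i j, i ≠ j → ∀ c : ZMod 3, h i ≠ c • h j)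
    (hv : Valid g) : IsPerfectCode (Cg h g) := by
  intro x
  have uniq : ∀ y ∈ Cg h g, ∀ z ∈ Cg h g,
      hammingDist x y ≤ 1 → hammingDist x z ≤ 1 → y = z := by
    intro y hy z hz hxy hxz
    have h1 : HmL h (y - z) = 0 := by rw [map_sub, hy.1, hz.1, sub_self]
    have h2 : dotL g (y - z) = 0 := by rw [map_sub, hy.2, hz.2, sub_self]
    have h3 : hammingNorm (y - z) ≤ 2 := by
      have := hammingDist_triangle y x z
      rw [hammingDist_comm y x] at this
      rw [sub_eq_neg_add, ← hammingDist_eq_hammingNorm, hammingDist_comm]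
      omega
    have := wt_le_two_eq_zero hnz hnc hv h1 h2 h3
    rwa [sub_eq_zero] at this
  rcases syndrome_cover ht hnz hnc hv (HmL h x, dotL g x) with h0 | ⟨i, c, hc, hs⟩
  · have hx : x ∈ Cg h g := by
      rw [Prod.ext_iff] at h0
      exact ⟨h0.1, h0.2⟩
    refine ⟨x, ⟨hx, by rw [hammingDist_self]; omega⟩, ?_⟩
    intro y hy
    exact uniq y hy.1 x hx hy.2 (by rw [hammingDist_self]; omega)
  · rw [Prod.ext_iff] at hs
    have hc1 : HmL h (x - sgl i c) = 0 := by
      rw [map_sub, sgl_smul, map_smul]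
      have : HmL h x = c • HmL h (sgl i 1) := hs.1
      rw [this, sub_self]
    have hc2 : dotL g (x - sgl i c) = 0 := by
      rw [map_sub, sgl_smul, map_smul]
      have : dotL g x = c • dotL g (sgl i 1) := hs.2
      rw [this, sub_self]
    refine ⟨x - sgl i c, ⟨⟨hc1, hc2⟩, dist_sub_sgl_le_one x i c⟩, ?_⟩
    intro y hy
    exact uniq y hy.1 _ ⟨hc1, hc2⟩ hy.2 (dist_sub_sgl_le_one x i c)

theorem valid_of_perfect (hP : IsPerfectCode (Cg h g)) : Valid g := by
  have h0 : (0 : Fin (3 * t + 1) → ZMod 3) ∈ Cg h g := ⟨map_zero _, map_zero _⟩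
  constructor
  · intro j p p' hpp hgg
    set d := sgl (idx j p) 1 - sgl (idx j p') 1 with hd
    have hdC : d ∈ Cg h g := by
      constructor
      · rw [hd, map_sub, HmL_single_idx, HmL_single_idx, sub_self]
      · rw [hd, map_sub, dotL_single, dotL_single, mul_one, mul_one, hgg, sub_self]
    obtain ⟨cc, _, huniq⟩ := hP (sgl (idx j p) 1)
    have e1 : (0 : Fin (3 * t + 1) → ZMod 3) = cc := huniq 0 ⟨h0, by
      rw [hammingDist_zero_right]; exact hn_sgl_le _ _⟩
    have e2 : d = cc := huniq d ⟨hdC, by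
      rw [hammingDist_comm, hammingDist_eq_hammingNorm, hd, neg_sub, sub_add_cancel]; exact hn_sgl_le _ _⟩
    have hzero : d = 0 := e2.trans e1.symm
    have := congrFun hzero (idx j p)
    rw [hd, Pi.sub_apply, Pi.zero_apply, sgl_apply, if_pos rfl, sgl_apply,
      if_neg (fun hh : idx j p = idx j p' => hpp (idx_inj hh).2)] at this
    norm_num at this
  · intro hg0
    have hdC : sgl (lastIdx t) 1 ∈ Cg h g := by
      constructor
      · exact HmL_single_last h 1
      · rw [dotL_single, hg0, zero_mul]
    obtain ⟨cc, _, huniq⟩ := hP 0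
    have e1 : (0 : Fin (3 * t + 1) → ZMod 3) = cc :=
      huniq 0 ⟨h0, by rw [hammingDist_self]; omega⟩
    have e2 : sgl (lastIdx t) 1 = cc := huniq _ ⟨hdC, by
      rw [hammingDist_comm, hammingDist_zero_right]; exact hn_sgl_le _ _⟩
    have hzero : sgl (lastIdx t) 1 = 0 := e2.trans e1.symm
    have := congrFun hzero (lastIdx t)
    rw [sgl_apply, if_pos rfl, Pi.zero_apply] at this
    exact one_ne_zero this


lemma sgl_zero (i : Fin (3 * t + 1)) : sgl i (0 : ZMod 3) = 0 := by
  funext k; simp [sgl_apply]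

lemma norm_le_one_exists {w : Fin (3 * t + 1) → ZMod 3} (hw : hammingNorm w ≤ 1) :
    ∃ i a, w = sgl i a := by
  classical
  by_cases h0 : w = 0
  · exact ⟨lastIdx t, 0, by rw [h0, sgl_zero]⟩
  · obtain ⟨k, hk⟩ : ∃ k, w k ≠ 0 := by
      by_contra hall; push_neg at hall; exact h0 (funext hall)
    refine ⟨k, w k, funext fun k' => ?_⟩
    rw [sgl_apply]
    split_ifs with he
    · rw [he]
    · by_contra hne
      have hsub2 : ({k, k'} : Finset (Fin (3 * t + 1))) ⊆
          Finset.univ.filter (fun i => w i ≠ 0) := by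
        intro z hz
        rcases Finset.mem_insert.mp hz with rfl | hz
        · simp [hk]
        · rw [Finset.mem_singleton] at hz
          subst hz
          simp [hne]
      have : 2 ≤ hammingNorm w := by
        have hcard2 : ({k, k'} : Finset (Fin (3 * t + 1))).card = 2 :=
          Finset.card_pair (fun hh => he hh.symm)
        calc 2 = ({k, k'} : Finset (Fin (3 * t + 1))).card := hcard2.symm
          _ ≤ (Finset.univ.filter (fun i => w i ≠ 0)).card := Finset.card_le_card hsub2
          _ = hammingNorm w := rfl
      omega

theorem exists_g (ht : 2 * t + 1 = 3 ^ (m - 1))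
    (hnz : ∀ j, h j ≠ 0)
    (hnc : ∀ i j, i ≠ j → ∀ c : ZMod 3, h i ≠ c • h j)
    {D : Set (Fin (3 * t + 1) → ZMod 3)}
    (hsub : D ⊆ spanCode m t h) (hlin : IsLinearCode D) (hP : IsPerfectCode D) :
    ∃ g, Valid g ∧ D = Cg h g := by
  classical
  have hzmod : ∀ c : ZMod 3, c = 0 ∨ c = 1 ∨ c = 2 := by decide
  have hsmul : ∀ (c : ZMod 3) x, x ∈ D → c • x ∈ D := by
    intro c x hx
    rcases hzmod c with rfl | rfl | rfl
    · rw [zero_smul]; exact hlin.1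
    · rw [one_smul]; exact hx
    · rw [two_smul]; exact hlin.2 x hx x hx
  have hsubD : ∀ x ∈ D, ∀ y ∈ D, x - y ∈ D := by
    intro x hx y hy
    have := hsmul (-1) y hy
    rw [neg_one_smul] at this
    rw [sub_eq_add_neg]
    exact hlin.2 x hx _ this
  have hspan : ∀ x ∈ D, HmL h x = 0 := fun x hx => mem_spanCode.mp (hsub hx)
  have heD : sgl (lastIdx t) 1 ∉ D := by
    intro heD
    obtain ⟨cc, _, huniq⟩ := hP 0
    have e1 := huniq 0 ⟨hlin.1, by rw [hammingDist_self]; omega⟩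
    have e2 := huniq (sgl (lastIdx t) 1) ⟨heD, by
      rw [hammingDist_comm, hammingDist_zero_right]; exact hn_sgl_le _ _⟩
    have hzero : sgl (lastIdx t) 1 = 0 := e2.trans e1.symm
    have := congrFun hzero (lastIdx t)
    rw [sgl_apply, if_pos rfl, Pi.zero_apply] at this
    exact one_ne_zero this
  have hdec : ∀ x, HmL h x = 0 → ∃ c : ZMod 3, x - c • sgl (lastIdx t) 1 ∈ D := by
    intro x hx
    obtain ⟨cc, ⟨hccD, hdist⟩, _⟩ := hP x
    have hw : hammingNorm (x - cc) ≤ 1 := by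
      rw [sub_eq_neg_add, ← hammingDist_eq_hammingNorm, hammingDist_comm]; exact hdist
    obtain ⟨i, a, hia⟩ := norm_le_one_exists hw
    have hker : HmL h (x - cc) = 0 := by rw [map_sub, hx, hspan cc hccD, sub_self]
    rcases idx_cases i with ⟨j, p, rfl⟩ | rfl
    · rw [hia, HmL_single_idx] at hker
      have ha : a = 0 := by
        by_contra ha
        apply hnz j
        funext s'
        have := congrFun hker s'
        rw [Pi.smul_apply, smul_eq_mul, Pi.zero_apply] at this
        exact (mul_eq_zero.mp this).resolve_left ha
      refine ⟨0, ?_⟩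
      rw [zero_smul, sub_zero]
      have hxz : x - cc = 0 := by rw [hia, ha, sgl_zero]
      have hxcc : x = cc := sub_eq_zero.mp hxz
      rwa [hxcc]
    · refine ⟨a, ?_⟩
      have hxa : x - a • sgl (lastIdx t) 1 = cc := by
        rw [← sgl_smul, ← hia, sub_sub_cancel]
      rwa [hxa]
  have hdecu : ∀ x (c c' : ZMod 3), x - c • sgl (lastIdx t) 1 ∈ D →
      x - c' • sgl (lastIdx t) 1 ∈ D → c = c' := by
    intro x c c' hc hc'
    by_contra hcc
    apply heD
    have hd : (x - c' • sgl (lastIdx t) 1) - (x - c • sgl (lastIdx t) 1) ∈ D :=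
      hsubD _ hc' _ hc
    have hd2 : (x - c' • sgl (lastIdx t) 1) - (x - c • sgl (lastIdx t) 1) =
        (c - c') • sgl (lastIdx t) 1 := by rw [sub_smul]; abel
    rw [hd2] at hd
    have := hsmul (c - c')⁻¹ _ hd
    rwa [smul_smul, inv_mul_cancel₀ (sub_ne_zero.mpr hcc), one_smul] at this
  choose! cS hcS using hdec
  choose u hu using fun v => HmL_surj h ht hnz hnc v
  set P : (Fin (3 * t + 1) → ZMod 3) → (Fin (3 * t + 1) → ZMod 3) :=
    fun x => x - ∑ r, HmL h x r • u (sglR m r 1) with hPdef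
  have hPker : ∀ x, HmL h (P x) = 0 := by
    intro x
    rw [hPdef]
    simp only
    rw [map_sub, map_sum]
    have : ∀ r, HmL h (HmL h x r • u (sglR m r 1)) = HmL h x r • sglR m r 1 := fun r => by
      rw [map_smul, hu]
    rw [Finset.sum_congr rfl fun r _ => this r, sum_single_syndrome, sub_self]
  have hPS : ∀ x, HmL h x = 0 → P x = x := by
    intro x hx
    rw [hPdef]
    simp only
    have : ∀ r, HmL h x r • u (sglR m r 1) = 0 := by
      intro r
      rw [congrFun hx r, Pi.zero_apply, zero_smul]
    rw [Finset.sum_congr rfl fun r _ => this r, Finset.sum_const_zero, sub_zero]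
  have hPadd : ∀ x y, P (x + y) = P x + P y := by
    intro x y
    rw [hPdef]
    simp only [map_add]
    have : ∀ r, ((HmL h x + HmL h y) r) • u (sglR m r 1) =
        HmL h x r • u (sglR m r 1) + HmL h y r • u (sglR m r 1) := by
      intro r
      rw [Pi.add_apply, add_smul]
    rw [Finset.sum_congr rfl fun r _ => this r, Finset.sum_add_distrib]
    abel
  have hcadd : ∀ a, HmL h a = 0 → ∀ b, HmL h b = 0 → cS (a + b) = cS a + cS b := by
    intro a ha b hb
    have hab : HmL h (a + b) = 0 := by rw [map_add, ha, hb, add_zero]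
    apply hdecu (a + b)
    · exact hcS _ hab
    · have h1 := hlin.2 _ (hcS a ha) _ (hcS b hb)
      have h2 : a - cS a • sgl (lastIdx t) 1 + (b - cS b • sgl (lastIdx t) 1) =
          (a + b) - (cS a + cS b) • sgl (lastIdx t) 1 := by
        rw [add_smul]; abel
      rwa [h2] at h1
  set Φ : (Fin (3 * t + 1) → ZMod 3) → ZMod 3 := fun x => cS (P x) with hΦdef
  have hΦadd : ∀ x y, Φ (x + y) = Φ x + Φ y := by
    intro x y
    rw [hΦdef]
    simp only
    rw [hPadd]
    exact hcadd _ (hPker x) _ (hPker y)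
  set Φh : (Fin (3 * t + 1) → ZMod 3) →+ ZMod 3 := AddMonoidHom.mk' Φ hΦadd with hΦh
  have hΦsmul : ∀ (a : ZMod 3) v, Φh (a • v) = a * Φh v := by
    intro a v
    rcases hzmod a with rfl | rfl | rfl
    · rw [zero_smul, map_zero, zero_mul]
    · rw [one_smul, one_mul]
    · rw [two_smul, map_add, two_mul]
  set g : Fin (3 * t + 1) → ZMod 3 := fun i => Φh (sgl i 1) with hgdef
  have hdot : ∀ x, dotL g x = Φh x := by
    intro x
    have h1 : dotL g x = ∑ i, x i * g i := by rw [dot_comm]; rfl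
    rw [h1]
    have h2 : ∀ i, x i * g i = Φh (sgl i (x i)) := by
      intro i
      rw [hgdef]
      simp only
      rw [← hΦsmul, ← sgl_smul]
    rw [Finset.sum_congr rfl fun i _ => h2 i, ← map_sum, sum_sgl]
  have hΦS : ∀ x, HmL h x = 0 → Φh x = cS x := by
    intro x hx
    show Φ x = cS x
    rw [hΦdef]
    simp only
    rw [hPS x hx]
  have hDg : D = Cg h g := by
    ext x
    constructor
    · intro hx
      have hx0 : HmL h x = 0 := hspan x hx
      refine ⟨hx0, ?_⟩
      rw [hdot, hΦS x hx0]
      have : cS x = 0 := by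
        apply hdecu x
        · exact hcS x hx0
        · rw [zero_smul, sub_zero]; exact hx
      exact this
    · rintro ⟨h1, h2⟩
      rw [hdot, hΦS x h1] at h2
      have := hcS x h1
      rwa [h2, zero_smul, sub_zero] at this
  refine ⟨g, ?_, hDg⟩
  exact valid_of_perfect (hDg ▸ hP)

end Perfect

/-! ### Fibers of g ↦ Dg -/

section Fibers

variable {h : Fin t → Fin (m - 1) → ZMod 3}

lemma dotL_fst_sub (g g' x : Fin (3 * t + 1) → ZMod 3) (c : ZMod 3) :
    dotL (g' - c • g) x = dotL g' x - c * dotL g x := by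
  rw [dot_comm, map_sub, map_smul, dot_comm g', dot_comm g, smul_eq_mul]

lemma dotL_fst_add (g g' x : Fin (3 * t + 1) → ZMod 3) :
    dotL (g + g') x = dotL g x + dotL g' x := by
  rw [dot_comm, map_add, dot_comm g, dot_comm g']

lemma dotL_fst_smul (g x : Fin (3 * t + 1) → ZMod 3) (c : ZMod 3) :
    dotL (c • g) x = c * dotL g x := by
  rw [dot_comm, map_smul, dot_comm g, smul_eq_mul]

lemma sum_lam_ker {lam : Fin (m - 1) → ZMod 3} {x : Fin (3 * t + 1) → ZMod 3}
    (hx : HmL h x = 0) : ∑ r, lam r * HmL h x r = 0 :=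
  Finset.sum_eq_zero fun r _ => by rw [congrFun hx r, Pi.zero_apply, mul_zero]

/-- A canonical element of `Dg h g α` when `g` is valid. -/
lemma Dg_mem_elt {g : Fin (3 * t + 1) → ZMod 3} (hv : Valid g) (α : ZMod 3) :
    (α * (g (lastIdx t))⁻¹) • sgl (lastIdx t) 1 ∈ Dg h g α := by
  constructor
  · rw [map_smul, HmL_single_last, smul_zero]
  · rw [map_smul, dotL_single, mul_one, smul_eq_mul, mul_assoc,
      inv_mul_cancel₀ hv.2, mul_one]

lemma fiber_rel (ht : 2 * t + 1 = 3 ^ (m - 1))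
    (hnz : ∀ j, h j ≠ 0)
    (hnc : ∀ i j, i ≠ j → ∀ c : ZMod 3, h i ≠ c • h j)
    {g g' : Fin (3 * t + 1) → ZMod 3} (hvg : Valid g) (hvg' : Valid g')
    {α α' : ZMod 3} (heq : Dg h g α = Dg h g' α') :
    ∃ (c : ZMod 3) (lam : Fin (m - 1) → ZMod 3),
      c ≠ 0 ∧ g' = c • g + rowComb h lam ∧ α' = c * α := by
  classical
  set v := (α * (g (lastIdx t))⁻¹) • sgl (lastIdx t) 1 with hvdef
  have hvmem : v ∈ Dg h g α := Dg_mem_elt hvg α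
  have hvmem' : v ∈ Dg h g' α' := heq ▸ hvmem
  have hCg : ∀ x, HmL h x = 0 → (dotL g x = 0 ↔ dotL g' x = 0) := by
    intro x hx
    have hxv : HmL h (x + v) = 0 := by rw [map_add, hx, hvmem.1, add_zero]
    constructor
    · intro h0
      have hmem2 : x + v ∈ Dg h g α := ⟨hxv, by rw [map_add, h0, hvmem.2, zero_add]⟩
      rw [heq] at hmem2
      have h2 := hmem2.2
      rw [map_add, hvmem'.2] at h2
      rwa [add_eq_right] at h2
    · intro h0
      have hmem2 : x + v ∈ Dg h g' α' := ⟨hxv, by rw [map_add, h0, hvmem'.2, zero_add]⟩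
      rw [← heq] at hmem2
      have h2 := hmem2.2
      rw [map_add, hvmem.2] at h2
      rwa [add_eq_right] at h2
  set c := g' (lastIdx t) * (g (lastIdx t))⁻¹ with hcdef
  have hc : c ≠ 0 := mul_ne_zero hvg'.2 (inv_ne_zero hvg.2)
  have key : ∀ x, HmL h x = 0 → dotL g' x = c * dotL g x := by
    intro x hx
    set y := x - (dotL g x * (g (lastIdx t))⁻¹) • sgl (lastIdx t) 1 with hy
    have hy1 : HmL h y = 0 := by
      rw [hy, map_sub, hx, map_smul, HmL_single_last, smul_zero, sub_zero]
    have hy2 : dotL g y = 0 := by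
      rw [hy, map_sub, map_smul, dotL_single, mul_one, smul_eq_mul, mul_assoc,
        inv_mul_cancel₀ hvg.2, mul_one, sub_self]
    have hy3 := (hCg y hy1).mp hy2
    rw [hy, map_sub, map_smul, dotL_single, mul_one, smul_eq_mul, sub_eq_zero] at hy3
    rw [hy3, hcdef]
    ring
  have hann : ∀ x, HmL h x = 0 → dotL (g' - c • g) x = 0 := by
    intro x hx
    rw [dotL_fst_sub, key x hx, sub_self]
  obtain ⟨lam, hlam⟩ := annihilator h ht hnz hnc hann
  refine ⟨c, lam, hc, sub_eq_iff_eq_add'.mp hlam, ?_⟩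
  rw [← hvmem'.2, key v hvmem.1, hvmem.2]

lemma Dg_scale {g : Fin (3 * t + 1) → ZMod 3} (hv : Valid g) {c : ZMod 3} (hc : c ≠ 0)
    (lam : Fin (m - 1) → ZMod 3) (α : ZMod 3) :
    Valid (c • g + rowComb h lam) ∧ Dg h (c • g + rowComb h lam) (c * α) = Dg h g α := by
  have happ_idx : ∀ j p, (c • g + rowComb h lam) (idx j p) =
      c * g (idx j p) + ∑ r, lam r * h j r := by
    intro j p
    rw [Pi.add_apply, Pi.smul_apply, smul_eq_mul, rowComb_apply_idx]
  have happ_last : (c • g + rowComb h lam) (lastIdx t) = c * g (lastIdx t) := by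
    rw [Pi.add_apply, Pi.smul_apply, smul_eq_mul, rowComb_apply_last, add_zero]
  refine ⟨⟨?_, ?_⟩, ?_⟩
  · intro j p p' hpp heq2
    rw [happ_idx, happ_idx] at heq2
    have hcc : c * g (idx j p) = c * g (idx j p') := by linear_combination heq2
    exact hv.1 j p p' hpp (mul_left_cancel₀ hc hcc)
  · rw [happ_last]; exact mul_ne_zero hc hv.2
  · ext x
    simp only [mem_Dg]
    constructor
    · rintro ⟨h1, h2⟩
      refine ⟨h1, ?_⟩
      rw [dotL_fst_add, dotL_fst_smul, dotL_rowComb, sum_lam_ker h1, add_zero] at h2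
      exact mul_left_cancel₀ hc h2
    · rintro ⟨h1, h2⟩
      refine ⟨h1, ?_⟩
      rw [dotL_fst_add, dotL_fst_smul, dotL_rowComb, sum_lam_ker h1, add_zero, h2]

lemma rowComb_sub (lam lam' : Fin (m - 1) → ZMod 3) :
    rowComb h (lam - lam') = rowComb h lam - rowComb h lam' := by
  rw [rowComb, rowComb, rowComb, ← Finset.sum_sub_distrib]
  exact Finset.sum_congr rfl fun r _ => by rw [Pi.sub_apply, sub_smul]

lemma scale_inj (ht : 2 * t + 1 = 3 ^ (m - 1))
    (hnz : ∀ j, h j ≠ 0)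
    (hnc : ∀ i j, i ≠ j → ∀ c : ZMod 3, h i ≠ c • h j)
    {g : Fin (3 * t + 1) → ZMod 3} (hv : Valid g) {c c' : ZMod 3}
    {lam lam' : Fin (m - 1) → ZMod 3}
    (heq : c • g + rowComb h lam = c' • g + rowComb h lam') : c = c' ∧ lam = lam' := by
  have h1 := congrFun heq (lastIdx t)
  rw [Pi.add_apply, Pi.add_apply, Pi.smul_apply, Pi.smul_apply, rowComb_apply_last,
    rowComb_apply_last, add_zero, add_zero, smul_eq_mul, smul_eq_mul] at h1
  have hcc : c = c' := mul_right_cancel₀ hv.2 h1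
  subst hcc
  have h2 : rowComb h lam = rowComb h lam' := add_left_cancel heq
  have h3 : rowComb h (lam - lam') = 0 := by rw [rowComb_sub, h2, sub_self]
  have := rows_indep h ht hnz hnc h3
  exact ⟨rfl, by rwa [sub_eq_zero] at this⟩

end Fibers

/-! ### Counting -/

lemma card_fiber_mul {X Y : Type*} [Finite X] [Finite Y] (f : X → Y) (k : ℕ)
    (hk : ∀ y, Nat.card {x // f x = y} = k) : Nat.card X = Nat.card Y * k := by
  classical
  have hX := Fintype.ofFinite X
  have hY := Fintype.ofFinite Y
  rw [← Nat.card_congr (Equiv.sigmaFiberEquiv f)]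
  rw [Nat.card_eq_fintype_card, Fintype.card_sigma]
  have : ∀ y : Y, Fintype.card {x // f x = y} = k := by
    intro y
    rw [← Nat.card_eq_fintype_card]
    exact hk y
  rw [Finset.sum_congr rfl fun y _ => this y, Finset.sum_const, Finset.card_univ,
    smul_eq_mul, Nat.card_eq_fintype_card]

noncomputable def packG (F : Fin t → (Fin 3 ↪ ZMod 3)) (c : ZMod 3) :
    Fin (3 * t + 1) → ZMod 3 :=
  fun i => if hlt : i.1 < 3 * t then F ⟨i.1 / 3, by omega⟩ ⟨i.1 % 3, by omega⟩ else c

lemma packG_idx (F : Fin t → (Fin 3 ↪ ZMod 3)) (c : ZMod 3) (j : Fin t) (p : Fin 3) :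
    packG F c (idx j p) = F j p := by
  have h4 := j.2; have h5 := p.2
  have hlt : (idx j p).1 < 3 * t := by simp only [idx]; omega
  rw [packG, dif_pos hlt]
  have hj : (⟨(idx j p).1 / 3, by omega⟩ : Fin t) = j := by
    apply Fin.ext; simp only [idx]; omega
  have hp : (⟨(idx j p).1 % 3, by omega⟩ : Fin 3) = p := by
    apply Fin.ext; simp only [idx]; omega
  rw [hj, hp]

lemma packG_last (F : Fin t → (Fin 3 ↪ ZMod 3)) (c : ZMod 3) :
    packG F c (lastIdx t) = c := by
  rw [packG, dif_neg]
  simp [lastIdx]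

lemma packG_valid (F : Fin t → (Fin 3 ↪ ZMod 3)) (c : {c : ZMod 3 // c ≠ 0}) :
    Valid (packG F c.1) := by
  constructor
  · intro j p p' hpp heq2
    rw [packG_idx, packG_idx] at heq2
    exact hpp ((F j).injective heq2)
  · rw [packG_last]; exact c.2

noncomputable def validEquiv :
    {g : Fin (3 * t + 1) → ZMod 3 // Valid g} ≃
      (Fin t → (Fin 3 ↪ ZMod 3)) × {c : ZMod 3 // c ≠ 0} where
  toFun g := (fun j => ⟨fun p => g.1 (idx j p),
      fun p p' hval => by
        by_contra hne
        exact g.2.1 j p p' hne hval⟩,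
    ⟨g.1 (lastIdx t), g.2.2⟩)
  invFun Fc := ⟨packG Fc.1 Fc.2.1, packG_valid Fc.1 Fc.2⟩
  left_inv g := by
    apply Subtype.ext
    funext i
    rcases idx_cases i with ⟨j, p, rfl⟩ | rfl
    · show packG _ _ (idx j p) = _
      rw [packG_idx]
      rfl
    · show packG _ _ (lastIdx t) = _
      rw [packG_last]
  right_inv Fc := by
    refine Prod.ext ?_ ?_
    · funext j
      apply DFunLike.ext
      intro p
      show packG _ _ (idx j p) = _
      rw [packG_idx]
    · apply Subtype.ext
      show packG _ _ (lastIdx t) = _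
      rw [packG_last]

lemma card_embedding_fin3 : Fintype.card (Fin 3 ↪ ZMod 3) = 6 := by
  rw [Fintype.card_embedding_eq]
  · rfl

lemma card_validG : Nat.card {g : Fin (3 * t + 1) → ZMod 3 // Valid g} = 6 ^ t * 2 := by
  rw [Nat.card_congr (validEquiv (t := t))]
  rw [Nat.card_eq_fintype_card, Fintype.card_prod, Fintype.card_fun, card_embedding_fin3,
    card_nonzero_zmod3, Fintype.card_fin]


/-! ### Coset parametrization -/

section Cosets

variable {h : Fin t → Fin (m - 1) → ZMod 3}

lemma Dg_is_coset (ht : 2 * t + 1 = 3 ^ (m - 1))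
    (hnz : ∀ j, h j ≠ 0)
    (hnc : ∀ i j, i ≠ j → ∀ c : ZMod 3, h i ≠ c • h j)
    {g : Fin (3 * t + 1) → ZMod 3} (hv : Valid g) (α : ZMod 3) :
    ∃ (v : Fin (3 * t + 1) → ZMod 3) (D₀ : Set (Fin (3 * t + 1) → ZMod 3)),
      IsLinearCode D₀ ∧ IsPerfectCode D₀ ∧ Dg h g α = (fun c => v + c) '' D₀ := by
  set v := (α * (g (lastIdx t))⁻¹) • sgl (lastIdx t) 1 with hvdef
  have hvm : v ∈ Dg h g α := Dg_mem_elt hv α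
  refine ⟨v, Cg h g, Cg_linear h g, perfect_of_valid ht hnz hnc hv, ?_⟩
  ext x
  constructor
  · rintro ⟨h1, h2⟩
    refine ⟨x - v, ⟨?_, ?_⟩, add_sub_cancel v x⟩
    · rw [map_sub, h1, hvm.1, sub_self]
    · rw [map_sub, h2, hvm.2, sub_self]
  · rintro ⟨y, hy, rfl⟩
    constructor
    · rw [map_add, hvm.1, hy.1, add_zero]
    · rw [map_add, hvm.2, hy.2, add_zero]

lemma coset_exists_g (ht : 2 * t + 1 = 3 ^ (m - 1))
    (hnz : ∀ j, h j ≠ 0)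
    (hnc : ∀ i j, i ≠ j → ∀ c : ZMod 3, h i ≠ c • h j)
    {D : Set (Fin (3 * t + 1) → ZMod 3)} (hsub : D ⊆ spanCode m t h)
    (hco : ∃ (v : Fin (3 * t + 1) → ZMod 3) (D₀ : Set (Fin (3 * t + 1) → ZMod 3)),
      IsLinearCode D₀ ∧ IsPerfectCode D₀ ∧ D = (fun c => v + c) '' D₀) :
    ∃ (g : Fin (3 * t + 1) → ZMod 3) (α : ZMod 3), Valid g ∧ D = Dg h g α := by
  obtain ⟨v, D₀, hlin, hperf, rfl⟩ := hco
  have hv0 : v ∈ (fun c => v + c) '' D₀ := ⟨0, hlin.1, add_zero v⟩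
  have hvS : HmL h v = 0 := mem_spanCode.mp (hsub hv0)
  have hD₀sub : D₀ ⊆ spanCode m t h := by
    intro y hy
    have hmem : v + y ∈ (fun c => v + c) '' D₀ := ⟨y, hy, rfl⟩
    have h1 := mem_spanCode.mp (hsub hmem)
    rw [map_add, hvS, zero_add] at h1
    exact mem_spanCode.mpr h1
  obtain ⟨g, hvg, hD₀⟩ := exists_g ht hnz hnc hD₀sub hlin hperf
  refine ⟨g, dotL g v, hvg, ?_⟩
  ext x
  constructor
  · rintro ⟨y, hy, rfl⟩
    rw [hD₀] at hy
    exact ⟨by rw [map_add, hvS, hy.1, add_zero], by rw [map_add, hy.2, add_zero]⟩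
  · rintro ⟨h1, h2⟩
    refine ⟨x - v, ?_, add_sub_cancel v x⟩
    rw [hD₀]
    constructor
    · rw [map_sub, h1, hvS, sub_self]
    · rw [map_sub, h2, sub_self]

end Cosets
end S15

/-- For `n = (3^m-1)/2 = 3t+1`, the number of ternary Hamming codes
(linear 1-perfect codes) contained in `S` equals `6^t / 3^{m-1}`, and the number of
cosets of Hamming codes contained in `S` equals `6^t / 3^{m-2}`. -/
theorem stmt_15 (m t : ℕ) (hm : 2 ≤ m) (ht : 2 * t + 1 = 3 ^ (m - 1))
    (h : Fin t → Fin (m - 1) → ZMod 3)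
    (hnz : ∀ j, h j ≠ 0)
    (hnc : ∀ i j, i ≠ j → ∀ c : ZMod 3, h i ≠ c • h j) :
    Nat.card {D : Set (Fin (3 * t + 1) → ZMod 3) //
        D ⊆ spanCode m t h ∧ IsLinearCode D ∧ IsPerfectCode D} * 3 ^ (m - 1) = 6 ^ t ∧
    Nat.card {D : Set (Fin (3 * t + 1) → ZMod 3) //
        D ⊆ spanCode m t h ∧ ∃ (v : Fin (3 * t + 1) → ZMod 3)
          (D₀ : Set (Fin (3 * t + 1) → ZMod 3)),
          IsLinearCode D₀ ∧ IsPerfectCode D₀ ∧ D = (fun c => v + c) '' D₀} *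
      3 ^ (m - 2) = 6 ^ t := by
  classical
  constructor
  · set f : {g : Fin (3 * t + 1) → ZMod 3 // S15.Valid g} →
        {D : Set (Fin (3 * t + 1) → ZMod 3) //
          D ⊆ spanCode m t h ∧ IsLinearCode D ∧ IsPerfectCode D} :=
      fun g => ⟨S15.Cg h g.1, S15.Dg_sub_span 0, S15.Cg_linear h g.1,
        S15.perfect_of_valid ht hnz hnc g.2⟩ with hf
    have hfib : ∀ DD, Nat.card {g // f g = DD} = 2 * 3 ^ (m - 1) := by
      rintro ⟨D, hsub, hlin, hperf⟩
      obtain ⟨g₀, hg₀v, hg₀⟩ := S15.exists_g ht hnz hnc hsub hlin hperf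
      set F : {c : ZMod 3 // c ≠ 0} × (Fin (m - 1) → ZMod 3) →
          {g // f g = ⟨D, hsub, hlin, hperf⟩} :=
        fun q => ⟨⟨q.1.1 • g₀ + S15.rowComb h q.2, (S15.Dg_scale hg₀v q.1.2 q.2 0).1⟩, by
          apply Subtype.ext
          show S15.Dg h (q.1.1 • g₀ + S15.rowComb h q.2) 0 = D
          have hsc := (S15.Dg_scale (h := h) hg₀v q.1.2 q.2 0).2
          rw [mul_zero] at hsc
          rw [hsc]
          exact hg₀.symm⟩ with hF
      have hFbij : Function.Bijective F := by
        constructor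
        · intro q q' hqq
          have hv2 : q.1.1 • g₀ + S15.rowComb h q.2 =
              q'.1.1 • g₀ + S15.rowComb h q'.2 := by
            have := congrArg (fun z => z.1.1) hqq
            exact this
          obtain ⟨hc, hlam⟩ := S15.scale_inj ht hnz hnc hg₀v hv2
          exact Prod.ext (Subtype.ext hc) hlam
        · rintro ⟨⟨g, hgval⟩, hfg⟩
          have hCg : S15.Cg h g = D := Subtype.ext_iff.mp hfg
          have heq : S15.Dg h g₀ 0 = S15.Dg h g 0 := hg₀.symm.trans hCg.symm
          obtain ⟨c, lam, hc, hgeq, -⟩ := S15.fiber_rel ht hnz hnc hg₀v hgval heq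
          exact ⟨(⟨c, hc⟩, lam), Subtype.ext (Subtype.ext hgeq.symm)⟩
      rw [← Nat.card_eq_of_bijective F hFbij, Nat.card_prod,
        Nat.card_eq_fintype_card, Nat.card_eq_fintype_card, S15.card_nonzero_zmod3,
        Fintype.card_fun]
      simp [ZMod.card]
    have hcnt := S15.card_fiber_mul f (2 * 3 ^ (m - 1)) hfib
    rw [S15.card_validG] at hcnt
    refine Nat.eq_of_mul_eq_mul_right (show 0 < 2 by norm_num) ?_
    rw [mul_assoc, mul_comm (3 ^ (m - 1)) 2, ← mul_assoc, mul_assoc, ← hcnt]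
  · set f : ({g : Fin (3 * t + 1) → ZMod 3 // S15.Valid g} × ZMod 3) →
        {D : Set (Fin (3 * t + 1) → ZMod 3) //
          D ⊆ spanCode m t h ∧ ∃ (v : Fin (3 * t + 1) → ZMod 3)
            (D₀ : Set (Fin (3 * t + 1) → ZMod 3)),
            IsLinearCode D₀ ∧ IsPerfectCode D₀ ∧ D = (fun c => v + c) '' D₀} :=
      fun q => ⟨S15.Dg h q.1.1 q.2, S15.Dg_sub_span q.2,
        S15.Dg_is_coset ht hnz hnc q.1.2 q.2⟩ with hf
    have hfib : ∀ DD, Nat.card {q // f q = DD} = 2 * 3 ^ (m - 1) := by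
      rintro ⟨D, hsub, hco⟩
      obtain ⟨g₀, α₀, hg₀v, hD⟩ := S15.coset_exists_g ht hnz hnc hsub hco
      set F : {c : ZMod 3 // c ≠ 0} × (Fin (m - 1) → ZMod 3) →
          {q // f q = ⟨D, hsub, hco⟩} :=
        fun q => ⟨(⟨q.1.1 • g₀ + S15.rowComb h q.2, (S15.Dg_scale hg₀v q.1.2 q.2 α₀).1⟩,
          q.1.1 * α₀), by
          apply Subtype.ext
          show S15.Dg h (q.1.1 • g₀ + S15.rowComb h q.2) (q.1.1 * α₀) = D
          rw [(S15.Dg_scale (h := h) hg₀v q.1.2 q.2 α₀).2]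
          exact hD.symm⟩ with hF
      have hFbij : Function.Bijective F := by
        constructor
        · intro q q' hqq
          have hv2 : q.1.1 • g₀ + S15.rowComb h q.2 =
              q'.1.1 • g₀ + S15.rowComb h q'.2 := by
            have := congrArg (fun z => z.1.1.1) hqq
            exact this
          obtain ⟨hc, hlam⟩ := S15.scale_inj ht hnz hnc hg₀v hv2
          exact Prod.ext (Subtype.ext hc) hlam
        · rintro ⟨⟨⟨g, hgval⟩, α⟩, hfg⟩
          have hCg : S15.Dg h g α = D := Subtype.ext_iff.mp hfg
          have heq : S15.Dg h g₀ α₀ = S15.Dg h g α := hD.symm.trans hCg.symm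
          obtain ⟨c, lam, hc, hgeq, hαeq⟩ := S15.fiber_rel ht hnz hnc hg₀v hgval heq
          refine ⟨(⟨c, hc⟩, lam), Subtype.ext ?_⟩
          refine Prod.ext (Subtype.ext hgeq.symm) hαeq.symm
      rw [← Nat.card_eq_of_bijective F hFbij, Nat.card_prod,
        Nat.card_eq_fintype_card, Nat.card_eq_fintype_card, S15.card_nonzero_zmod3,
        Fintype.card_fun]
      simp [ZMod.card]
    have hcnt := S15.card_fiber_mul f (2 * 3 ^ (m - 1)) hfib
    rw [Nat.card_prod, S15.card_validG, Nat.card_eq_fintype_card, ZMod.card] at hcnt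
    have hpow : 3 ^ (m - 1) = 3 ^ (m - 2) * 3 := by
      have hm2 : m - 1 = (m - 2) + 1 := by omega
      rw [hm2, pow_succ]
    rw [hpow] at hcnt
    refine Nat.eq_of_mul_eq_mul_right (show 0 < 6 by norm_num) ?_
    calc Nat.card _ * 3 ^ (m - 2) * 6
        = Nat.card _ * (2 * (3 ^ (m - 2) * 3)) := by ring
      _ = 6 ^ t * 2 * 3 := hcnt.symm
      _ = 6 ^ t * 6 := by ring
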